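/- Let u, v ∈ ℝ^n and define F : 𝒞_n → ℝ by F(x) = ⟨u,x⟩² ⟨v,x⟩². Then the derivative matrix of F satisfies ‖D^F‖_op ≤ 12 n ‖u‖₂² ‖v‖₂². -/
import Mathlib


noncomputable section

open scoped BigOperators

/-- The point of the Boolean hypercube associated with a Boolean string. -/
def sgnVec {n : ℕ} (b : Fin n → Bool) : Fin n → ℝ := fun i => if b i then 1 else -1

/-- Euclidean inner product on ℝ^n. -/
def dotR {n : ℕ} (u x : Fin n → ℝ) : ℝ := ∑ i, u i * x i

/-- Discrete derivative on the cube: `∂_i F(x) = (F(x^{i+}) − F(x^{i−}))/2`. -/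
def dderiv {n : ℕ} (F : (Fin n → Bool) → ℝ) (i : Fin n) (b : Fin n → Bool) : ℝ :=
  (F (Function.update b i true) - F (Function.update b i false)) / 2

/-- The derivative matrix `D^F_{ij} = max_x |∂_i ∂_j F(x)|`. -/
def derivMat {n : ℕ} (F : (Fin n → Bool) → ℝ) (i j : Fin n) : ℝ :=
  ⨆ b : Fin n → Bool, |dderiv (dderiv F j) i b|

/-- The `ℓ²→ℓ²` operator norm of an `n×n` matrix. -/
def matOpNorm {n : ℕ} (M : Fin n → Fin n → ℝ) : ℝ :=
  sSup { r : ℝ | ∃ x : Fin n → ℝ, (∑ i, x i ^ 2) = 1 ∧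
    r = Real.sqrt (∑ i, (∑ j, M i j * x j) ^ 2) }

lemma dot_update {n : ℕ} (u : Fin n → ℝ) (b : Fin n → Bool) (i : Fin n) (c : Bool) :
    dotR u (sgnVec (Function.update b i c)) =
      dotR u (sgnVec b) + u i * ((if c then (1:ℝ) else -1) - sgnVec b i) := by
  unfold dotR sgnVec
  have key : ∀ k ∈ Finset.univ, u k * (if Function.update b i c k then (1:ℝ) else -1) =
      u k * (if b k then (1:ℝ) else -1) +
        (if k = i then u i * ((if c then (1:ℝ) else -1) - (if b i then (1:ℝ) else -1)) else 0) := by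
    intro k _
    by_cases h : k = i
    · subst h; simp only [Function.update_self, if_pos rfl]
      rcases c <;> rcases b k <;> norm_num <;> ring
    · simp [Function.update_of_ne h, h]
  rw [Finset.sum_congr rfl key, Finset.sum_add_distrib, Finset.sum_ite_eq' Finset.univ i]
  simp

lemma dderiv_diag {n : ℕ} (F : (Fin n → Bool) → ℝ) (i : Fin n) (b : Fin n → Bool) :
    dderiv (dderiv F i) i b = 0 := by
  simp [dderiv, Function.update_idem]

lemma cs_aux {n : ℕ} (u t : Fin n → ℝ) (ht : ∀ k, t k = 0 ∨ t k = 1 ∨ t k = -1) :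
    (∑ k, u k * t k) ^ 2 ≤ (∑ k, u k ^ 2 * t k ^ 2) * n := by
  have h1 : (∑ k, u k * t k) = ∑ k, (u k * t k ^ 2) * t k := by
    apply Finset.sum_congr rfl; intro k _
    rcases ht k with h | h | h <;> rw [h] <;> ring
  rw [h1]
  calc (∑ k, (u k * t k ^ 2) * t k)^2 ≤ (∑ k, (u k * t k ^ 2)^2) * (∑ k, t k ^2) :=
        Finset.sum_mul_sq_le_sq_mul_sq _ _ _
    _ ≤ (∑ k, u k ^2 * t k ^2) * n := by
        apply mul_le_mul ?_ ?_ (by positivity) (by positivity)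
        · apply Finset.sum_le_sum; intro k _
          rcases ht k with h | h | h <;> rw [h] <;> ring_nf <;> norm_num
        · calc (∑ k : Fin n, t k ^ 2) ≤ ∑ _k : Fin n, (1:ℝ) :=
              Finset.sum_le_sum (fun k _ => by rcases ht k with h|h|h <;> rw [h] <;> norm_num)
          _ = n := by simp

lemma tilde_sq_le {n : ℕ} (u : Fin n → ℝ) (b : Fin n → Bool) {i j : Fin n} (hij : i ≠ j) :
    (dotR u (sgnVec b) - u i * sgnVec b i - u j * sgnVec b j)^2 + (u i^2 + u j^2)
      ≤ (n:ℝ) * (∑ k, u k^2) := by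
  set t : Fin n → ℝ := fun k => if k = i ∨ k = j then 0 else sgnVec b k with htdef
  have ht : ∀ k, t k = 0 ∨ t k = 1 ∨ t k = -1 := by
    intro k
    by_cases h : k = i ∨ k = j
    · left; simp [htdef, h]
    · rcases Bool.dichotomy (b k) with hb | hb
      · right; right; simp [htdef, h, sgnVec, hb]
      · right; left; simp [htdef, h, sgnVec, hb]
  have hA : dotR u (sgnVec b) - u i * sgnVec b i - u j * sgnVec b j = ∑ k, u k * t k := by
    have key : ∀ k ∈ Finset.univ, u k * t k =
        u k * sgnVec b k - (if k = i then u i * sgnVec b i else 0)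
          - (if k = j then u j * sgnVec b j else 0) := by
      intro k _
      by_cases h1 : k = i
      · subst h1; simp [htdef, hij]
      · by_cases h2 : k = j
        · subst h2; simp [htdef, h1]
        · simp [htdef, h1, h2]
    rw [Finset.sum_congr rfl key]
    simp only [Finset.sum_sub_distrib, Finset.sum_ite_eq' Finset.univ, Finset.mem_univ, if_true]
    unfold dotR; ring
  have hsum : (∑ k, u k^2 * t k^2) = (∑ k, u k^2) - u i^2 - u j^2 := by
    have key : ∀ k ∈ Finset.univ, u k^2 * t k^2 =
        u k^2 - (if k = i then u i^2 else 0) - (if k = j then u j^2 else 0) := by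
      intro k _
      by_cases h1 : k = i
      · subst h1; simp [htdef, hij]
      · by_cases h2 : k = j
        · subst h2; simp [htdef, h1]
        · have h3 : ¬(k = i ∨ k = j) := by tauto
          have : t k ^ 2 = 1 := by
            rcases Bool.dichotomy (b k) with hb | hb <;> simp [htdef, h3, sgnVec, hb]
          rw [this]; simp [h1, h2]
    rw [Finset.sum_congr rfl key]
    simp only [Finset.sum_sub_distrib, Finset.sum_ite_eq' Finset.univ, Finset.mem_univ, if_true]
  have hcs := cs_aux u t ht
  rw [← hA] at hcs
  rw [hsum] at hcs
  have hn : (1:ℝ) ≤ n := by exact_mod_cast Nat.one_le_iff_ne_zero.2 (by rintro rfl; exact i.elim0)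
  nlinarith [sq_nonneg (u i), sq_nonneg (u j)]

def Bnd {n : ℕ} (u v : Fin n → ℝ) (i j : Fin n) : ℝ :=
  4*((n:ℝ)*(Real.sqrt (∑ k, u k^2) * Real.sqrt (∑ k, v k^2)))*(|u j| * |v i| + |u i| * |v j|)
  + 2*(|v i| * |v j|)*((n:ℝ)*(∑ k, u k^2)) + 2*(|u i| * |u j|)*((n:ℝ)*(∑ k, v k^2))

lemma dot_corner {n : ℕ} (u : Fin n → ℝ) (b : Fin n → Bool) {i j : Fin n} (hij : i ≠ j)
    (c d : Bool) :
    dotR u (sgnVec (Function.update (Function.update b i c) j d)) =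
      (dotR u (sgnVec b) - u i * sgnVec b i - u j * sgnVec b j)
        + (if c then (1:ℝ) else -1) * u i + (if d then (1:ℝ) else -1) * u j := by
  rw [dot_update, dot_update]
  have : sgnVec (Function.update b i c) j = sgnVec b j := by
    simp [sgnVec, Function.update_of_ne (Ne.symm hij)]
  rw [this]; ring

lemma dd_point_bound {n : ℕ} (u v : Fin n → ℝ) {i j : Fin n} (hij : i ≠ j) (b : Fin n → Bool) :
    |dderiv (dderiv (fun b => dotR u (sgnVec b) ^ 2 * dotR v (sgnVec b) ^ 2) j) i b|
      ≤ Bnd u v i j := by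
  have hcu := fun c d => dot_corner u b hij c d
  have hcv := fun c d => dot_corner v b hij c d
  have hE : dderiv (dderiv (fun b => dotR u (sgnVec b) ^ 2 * dotR v (sgnVec b) ^ 2) j) i b =
      4*(dotR u (sgnVec b) - u i * sgnVec b i - u j * sgnVec b j)
        *(dotR v (sgnVec b) - v i * sgnVec b i - v j * sgnVec b j)*(u j*v i + u i*v j)
      + 2*(v i*v j)*((dotR u (sgnVec b) - u i * sgnVec b i - u j * sgnVec b j)^2+u i^2+u j^2)
      + 2*(u i*u j)*((dotR v (sgnVec b) - v i * sgnVec b i - v j * sgnVec b j)^2+v i^2+v j^2) := by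
    simp only [dderiv, hcu, hcv]
    norm_num
    ring
  set A := dotR u (sgnVec b) - u i * sgnVec b i - u j * sgnVec b j with hAdef
  set B := dotR v (sgnVec b) - v i * sgnVec b i - v j * sgnVec b j with hBdef
  have hSu0 : (0:ℝ) ≤ ∑ k, u k^2 := by positivity
  have hSv0 : (0:ℝ) ≤ ∑ k, v k^2 := by positivity
  have h1 : A^2 + u i^2 + u j^2 ≤ (n:ℝ) * (∑ k, u k^2) := by
    have h := tilde_sq_le u b hij
    rw [← hAdef] at h; linarith
  have h2 : B^2 + v i^2 + v j^2 ≤ (n:ℝ) * (∑ k, v k^2) := by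
    have h := tilde_sq_le v b hij
    rw [← hBdef] at h; linarith
  have hUV : |A| * |B| ≤ (n:ℝ) * (Real.sqrt (∑ k, u k^2) * Real.sqrt (∑ k, v k^2)) := by
    have ha : |A| ≤ Real.sqrt ((n:ℝ) * (∑ k, u k^2)) := by
      rw [← Real.sqrt_sq_eq_abs]
      apply Real.sqrt_le_sqrt
      nlinarith [sq_nonneg (u i), sq_nonneg (u j)]
    have hb : |B| ≤ Real.sqrt ((n:ℝ) * (∑ k, v k^2)) := by
      rw [← Real.sqrt_sq_eq_abs]
      apply Real.sqrt_le_sqrt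
      nlinarith [sq_nonneg (v i), sq_nonneg (v j)]
    calc |A| * |B| ≤ Real.sqrt ((n:ℝ) * (∑ k, u k^2)) * Real.sqrt ((n:ℝ) * (∑ k, v k^2)) :=
          mul_le_mul ha hb (abs_nonneg _) (Real.sqrt_nonneg _)
      _ = (n:ℝ) * (Real.sqrt (∑ k, u k^2) * Real.sqrt (∑ k, v k^2)) := by
          rw [Real.sqrt_mul (by positivity), Real.sqrt_mul (by positivity)]
          have hs : Real.sqrt (n:ℝ) * Real.sqrt (n:ℝ) = (n:ℝ) :=
            Real.mul_self_sqrt (by positivity)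
          linear_combination Real.sqrt (∑ k, u k^2) * Real.sqrt (∑ k, v k^2) * hs
  rw [hE]
  refine le_trans (abs_add_three _ _ _) ?_
  unfold Bnd
  have t1 : |4*A*B*(u j*v i + u i*v j)|
      ≤ 4*((n:ℝ)*(Real.sqrt (∑ k, u k^2) * Real.sqrt (∑ k, v k^2)))*(|u j| * |v i| + |u i| * |v j|) := by
    have hX : |u j*v i + u i*v j| ≤ |u j| * |v i| + |u i| * |v j| := by
      refine (abs_add_le _ _).trans ?_
      rw [abs_mul, abs_mul]
    calc |4*A*B*(u j*v i + u i*v j)| = 4*(|A| * |B|)*|u j*v i + u i*v j| := by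
          rw [abs_mul, abs_mul, abs_mul, (by norm_num : |(4:ℝ)| = 4)]; ring
      _ ≤ 4*((n:ℝ)*(Real.sqrt (∑ k, u k^2) * Real.sqrt (∑ k, v k^2)))*(|u j| * |v i| + |u i| * |v j|) := by
          gcongr
  have t2 : |2*(v i*v j)*(A^2+u i^2+u j^2)| ≤ 2*(|v i| * |v j|)*((n:ℝ)*(∑ k, u k^2)) := by
    have h0 : (0:ℝ) ≤ A^2+u i^2+u j^2 := by positivity
    calc |2*(v i*v j)*(A^2+u i^2+u j^2)| = 2*(|v i| * |v j|)*(A^2+u i^2+u j^2) := by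
          rw [abs_mul, abs_mul, abs_mul, abs_of_nonneg h0, (by norm_num : |(2:ℝ)| = 2)]
      _ ≤ 2*(|v i| * |v j|)*((n:ℝ)*(∑ k, u k^2)) := by gcongr
  have t3 : |2*(u i*u j)*(B^2+v i^2+v j^2)| ≤ 2*(|u i| * |u j|)*((n:ℝ)*(∑ k, v k^2)) := by
    have h0 : (0:ℝ) ≤ B^2+v i^2+v j^2 := by positivity
    calc |2*(u i*u j)*(B^2+v i^2+v j^2)| = 2*(|u i| * |u j|)*(B^2+v i^2+v j^2) := by
          rw [abs_mul, abs_mul, abs_mul, abs_of_nonneg h0, (by norm_num : |(2:ℝ)| = 2)]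
      _ ≤ 2*(|u i| * |u j|)*((n:ℝ)*(∑ k, v k^2)) := by gcongr
  exact add_le_add (add_le_add t1 t2) t3

lemma Bnd_nonneg {n : ℕ} (u v : Fin n → ℝ) (i j : Fin n) : 0 ≤ Bnd u v i j := by
  unfold Bnd; positivity

lemma point_bound_all {n : ℕ} (u v : Fin n → ℝ) (i j : Fin n) (b : Fin n → Bool) :
    |dderiv (dderiv (fun b => dotR u (sgnVec b) ^ 2 * dotR v (sgnVec b) ^ 2) j) i b|
      ≤ Bnd u v i j := by
  by_cases hij : i = j
  · subst hij; rw [dderiv_diag]; simpa using Bnd_nonneg u v i i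
  · exact dd_point_bound u v hij b

lemma derivMat_abs_le {n : ℕ} (u v : Fin n → ℝ) (i j : Fin n) :
    |derivMat (fun b => dotR u (sgnVec b) ^ 2 * dotR v (sgnVec b) ^ 2) i j| ≤ Bnd u v i j := by
  have hbdd : BddAbove (Set.range fun b : Fin n → Bool =>
      |dderiv (dderiv (fun b => dotR u (sgnVec b) ^ 2 * dotR v (sgnVec b) ^ 2) j) i b|) := by
    refine ⟨Bnd u v i j, ?_⟩
    rintro _ ⟨b, rfl⟩
    exact point_bound_all u v i j b
  have h1 : derivMat (fun b => dotR u (sgnVec b) ^ 2 * dotR v (sgnVec b) ^ 2) i j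
      ≤ Bnd u v i j := ciSup_le (point_bound_all u v i j)
  have h2 : 0 ≤ derivMat (fun b => dotR u (sgnVec b) ^ 2 * dotR v (sgnVec b) ^ 2) i j :=
    le_trans (abs_nonneg _) (le_ciSup hbdd (fun _ => false))
  rw [abs_of_nonneg h2]; exact h1

/-- Derivative-matrix bound for `F(x) = ⟨u,x⟩²⟨v,x⟩²`
(first part of Lemma `vectorproductdob` of the paper). -/
theorem derivMat_quartic (n : ℕ) (u v : Fin n → ℝ) :
    matOpNorm (derivMat (fun b => dotR u (sgnVec b) ^ 2 * dotR v (sgnVec b) ^ 2)) ≤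
      12 * n * (∑ i, u i ^ 2) * (∑ i, v i ^ 2) := by
  have hSu0 : (0:ℝ) ≤ ∑ k, u k^2 := by positivity
  have hSv0 : (0:ℝ) ≤ ∑ k, v k^2 := by positivity
  unfold matOpNorm
  refine Real.sSup_le ?_ (by positivity)
  rintro r ⟨x, hx, rfl⟩
  -- abbreviations
  have hU2 : Real.sqrt (∑ k, u k^2) ^ 2 = ∑ k, u k^2 := Real.sq_sqrt hSu0
  have hV2 : Real.sqrt (∑ k, v k^2) ^ 2 = ∑ k, v k^2 := Real.sq_sqrt hSv0
  have hU0 : (0:ℝ) ≤ Real.sqrt (∑ k, u k^2) := Real.sqrt_nonneg _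
  have hV0 : (0:ℝ) ≤ Real.sqrt (∑ k, v k^2) := Real.sqrt_nonneg _
  have hα0 : (0:ℝ) ≤ ∑ k, |u k| * |x k| := by positivity
  have hβ0 : (0:ℝ) ≤ ∑ k, |v k| * |x k| := by positivity
  have hα : (∑ k, |u k| * |x k|) ≤ Real.sqrt (∑ k, u k^2) := by
    have h := Finset.sum_mul_sq_le_sq_mul_sq Finset.univ (fun k => |u k|) (fun k => |x k|)
    simp only [sq_abs] at h
    rw [hx, mul_one] at h
    rw [← Real.sqrt_sq hα0]
    exact Real.sqrt_le_sqrt h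
  have hβ : (∑ k, |v k| * |x k|) ≤ Real.sqrt (∑ k, v k^2) := by
    have h := Finset.sum_mul_sq_le_sq_mul_sq Finset.univ (fun k => |v k|) (fun k => |x k|)
    simp only [sq_abs] at h
    rw [hx, mul_one] at h
    rw [← Real.sqrt_sq hβ0]
    exact Real.sqrt_le_sqrt h
  have huv : (∑ k, |u k| * |v k|) ≤ Real.sqrt (∑ k, u k^2) * Real.sqrt (∑ k, v k^2) := by
    have h := Finset.sum_mul_sq_le_sq_mul_sq Finset.univ (fun k => |u k|) (fun k => |v k|)
    simp only [sq_abs] at h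
    have h0 : (0:ℝ) ≤ ∑ k, |u k| * |v k| := by positivity
    rw [← Real.sqrt_sq h0, ← Real.sqrt_sq (mul_nonneg hU0 hV0)]
    apply Real.sqrt_le_sqrt
    rw [mul_pow, hU2, hV2]
    exact h
  -- p and q
  set W := Real.sqrt (∑ k, u k^2) * Real.sqrt (∑ k, v k^2) with hWdef
  set α := ∑ k, |u k| * |x k| with hαdef
  set β := ∑ k, |v k| * |x k| with hβdef
  set p := 4*((n:ℝ)*W)*β + 2*((n:ℝ)*(∑ k, v k^2))*α with hpdef
  set q := 4*((n:ℝ)*W)*α + 2*((n:ℝ)*(∑ k, u k^2))*β with hqdef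
  have hp0 : 0 ≤ p := by rw [hpdef]; positivity
  have hq0 : 0 ≤ q := by rw [hqdef]; positivity
  clear_value W α β p q
  have hrow : ∀ i, (∑ j, Bnd u v i j * |x j|) = |u i| * p + |v i| * q := by
    intro i
    have expand : ∀ j, Bnd u v i j * |x j| =
        (|u i| * (4*((n:ℝ)*W))) * (|v j| * |x j|) + (|v i| * (4*((n:ℝ)*W))) * (|u j| * |x j|)
        + (|v i| * (2*((n:ℝ)*(∑ k, u k^2)))) * (|v j| * |x j|)
        + (|u i| * (2*((n:ℝ)*(∑ k, v k^2)))) * (|u j| * |x j|) := by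
      intro j; unfold Bnd; rw [hWdef]; ring
    rw [Finset.sum_congr rfl (fun j _ => expand j)]
    rw [Finset.sum_add_distrib, Finset.sum_add_distrib, Finset.sum_add_distrib,
      ← Finset.mul_sum, ← Finset.mul_sum, ← Finset.mul_sum, ← Finset.mul_sum]
    rw [hpdef, hqdef, ← hαdef, ← hβdef]
    ring
  have hrow2 : ∀ i, (∑ j, derivMat (fun b => dotR u (sgnVec b) ^ 2 * dotR v (sgnVec b) ^ 2) i j
      * x j)^2 ≤ (|u i| * p + |v i| * q)^2 := by
    intro i
    have hb : |∑ j, derivMat (fun b => dotR u (sgnVec b) ^ 2 * dotR v (sgnVec b) ^ 2) i j * x j|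
        ≤ |u i| * p + |v i| * q := by
      refine (Finset.abs_sum_le_sum_abs _ _).trans ?_
      refine le_trans (Finset.sum_le_sum (fun j _ => ?_)) (le_of_eq (hrow i))
      rw [abs_mul]
      exact mul_le_mul_of_nonneg_right (derivMat_abs_le u v i j) (abs_nonneg _)
    calc (∑ j, derivMat (fun b => dotR u (sgnVec b) ^ 2 * dotR v (sgnVec b) ^ 2) i j * x j)^2
        = |∑ j, derivMat (fun b => dotR u (sgnVec b) ^ 2 * dotR v (sgnVec b) ^ 2) i j * x j|^2 :=
          (sq_abs _).symm
      _ ≤ (|u i| * p + |v i| * q)^2 := by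
          apply pow_le_pow_left₀ (abs_nonneg _) hb
  have hsum : (∑ i, (∑ j, derivMat (fun b => dotR u (sgnVec b) ^ 2 * dotR v (sgnVec b) ^ 2) i j
      * x j)^2) ≤ (p * Real.sqrt (∑ k, u k^2) + q * Real.sqrt (∑ k, v k^2))^2 := by
    have step1 : (∑ i, (∑ j, derivMat (fun b => dotR u (sgnVec b) ^ 2 * dotR v (sgnVec b) ^ 2) i j
        * x j)^2) ≤ ∑ i, (|u i| * p + |v i| * q)^2 := Finset.sum_le_sum (fun i _ => hrow2 i)
    have step2 : (∑ i, (|u i| * p + |v i| * q)^2)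
        = p^2*(∑ k, u k^2) + (2*p*q)*(∑ k, |u k| * |v k|) + q^2*(∑ k, v k^2) := by
      have e : ∀ i, (|u i| * p + |v i| * q)^2
          = p^2*(u i^2) + (2*p*q)*(|u i| * |v i|) + q^2*(v i^2) := by
        intro i; rw [← sq_abs (u i), ← sq_abs (v i)]; ring
      rw [Finset.sum_congr rfl (fun i _ => e i), Finset.sum_add_distrib, Finset.sum_add_distrib,
        ← Finset.mul_sum, ← Finset.mul_sum, ← Finset.mul_sum]
    have step3 : p^2*(∑ k, u k^2) + (2*p*q)*(∑ k, |u k| * |v k|) + q^2*(∑ k, v k^2)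
        ≤ (p * Real.sqrt (∑ k, u k^2) + q * Real.sqrt (∑ k, v k^2))^2 := by
      have e : (p * Real.sqrt (∑ k, u k^2) + q * Real.sqrt (∑ k, v k^2))^2
          = p^2*(∑ k, u k^2) + (2*p*q)*(Real.sqrt (∑ k, u k^2) * Real.sqrt (∑ k, v k^2))
            + q^2*(∑ k, v k^2) := by
        rw [add_sq, mul_pow, mul_pow, hU2, hV2]; ring
      rw [e, ← hWdef]
      have h2pq : (0:ℝ) ≤ 2*p*q := by positivity
      have hm := mul_le_mul_of_nonneg_left huv h2pq
      linarith
    exact step1.trans (step2.le.trans step3)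
  refine le_trans (Real.sqrt_le_sqrt hsum) ?_
  rw [Real.sqrt_sq (by positivity)]
  -- final numeric bound
  have hn0 : (0:ℝ) ≤ (n:ℝ) := Nat.cast_nonneg n
  have final : ∀ (N U V a c Su Sv : ℝ), 0 ≤ N → 0 ≤ U → 0 ≤ V → 0 ≤ a → 0 ≤ c →
      a ≤ U → c ≤ V → U^2 = Su → V^2 = Sv →
      (4*(N*(U*V))*c + 2*(N*Sv)*a)*U + (4*(N*(U*V))*a + 2*(N*Su)*c)*V ≤ 12*N*Su*Sv := by
    intro N U V a c Su Sv hN hU hV ha hc haU hcV hSu hSv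
    subst hSu; subst hSv
    linarith [mul_nonneg (mul_nonneg (mul_nonneg (mul_nonneg hN hU) hV) hU) (sub_nonneg.2 hcV),
      mul_nonneg (mul_nonneg (mul_nonneg hN (mul_nonneg hV hV)) hU) (sub_nonneg.2 haU),
      mul_nonneg (mul_nonneg (mul_nonneg (mul_nonneg hN hU) hV) hV) (sub_nonneg.2 haU),
      mul_nonneg (mul_nonneg (mul_nonneg hN (mul_nonneg hU hU)) hV) (sub_nonneg.2 hcV)]
  rw [hpdef, hqdef, hWdef]
  exact final n _ _ α β _ _ hn0 hU0 hV0 hα0 hβ0 hα hβ hU2 hV2
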